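/- Let A = [[p, a, b̄],[ā, m, c],[b, c̄, n]] be a 3×3 Hermitian quaternionic matrix and suppose A v = λ v with λ real and v = (x, y, z)ᵀ. Then (λ³ − (tr A)λ² + σ(A)λ − det A)·z = b(a(cz)) + c̄(ā(b̄z)) − (b(ac) + (c̄ā)b̄)z, and in particular (since quaternions associate) λ satisfies the characteristic equation λ³ − (tr A)λ² + σ(A)λ − det A = 0 whenever v ≠ 0 with z ≠ 0. -/
import Mathlib

theorem quaternion_real_eigenvalue_char_eq (p m n : ℝ) (a b c : Quaternion ℝ)
    (lam : ℝ) (x y z : Quaternion ℝ)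
    (h : (!![(p : Quaternion ℝ), a, star b;
             star a, (m : Quaternion ℝ), c;
             b, star c, (n : Quaternion ℝ)]).mulVec ![x, y, z]
          = (lam : Quaternion ℝ) • ![x, y, z]) :
    let σ : ℝ := p * m + p * n + m * n
      - Quaternion.normSq a - Quaternion.normSq b - Quaternion.normSq c
    let detA : ℝ := p * m * n + 2 * (b * (a * c)).re
      - n * Quaternion.normSq a - m * Quaternion.normSq b - p * Quaternion.normSq c
    (((lam ^ 3 - (p + m + n) * lam ^ 2 + σ * lam - detA : ℝ) : Quaternion ℝ) * z
        = b * (a * (c * z)) + star c * (star a * (star b * z))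
          - (b * (a * c) + (star c * star a) * star b) * z) ∧
    (z ≠ 0 → lam ^ 3 - (p + m + n) * lam ^ 2 + σ * lam - detA = 0) := by
  intro σ detA
  have e1 := congr_fun h 0
  have e2 := congr_fun h 1
  have e3 := congr_fun h 2
  simp only [Matrix.mulVec, dotProduct, Fin.sum_univ_three, Matrix.cons_val',
    Matrix.cons_val_zero, Matrix.cons_val_one, Matrix.head_cons, Matrix.empty_val',
    Matrix.cons_val_fin_one, Matrix.head_fin_const, Matrix.cons_val_two, Matrix.tail_cons,
    Pi.smul_apply, smul_eq_mul, Matrix.of_apply] at e1 e2 e3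
  have cmul : ∀ (r : ℝ) (q w : Quaternion ℝ), (r : Quaternion ℝ) * (q * w) = q * ((r : Quaternion ℝ) * w) := by
    intro r q w
    rw [← mul_assoc, Quaternion.coe_commutes, mul_assoc]
  have A1 : ((lam - p : ℝ) : Quaternion ℝ) * x = a * y + star b * z := by
    push_cast
    rw [sub_mul, ← e1]; abel
  have A2 : ((lam - m : ℝ) : Quaternion ℝ) * y = star a * x + c * z := by
    push_cast
    rw [sub_mul, ← e2]; abel
  have A3 : ((lam - n : ℝ) : Quaternion ℝ) * z = b * x + star c * y := by
    push_cast
    rw [sub_mul, ← e3]; abel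
  have Dx : (((lam - m) * (lam - p) - Quaternion.normSq a : ℝ) : Quaternion ℝ) * x
      = a * (c * z) + ((lam - m : ℝ) : Quaternion ℝ) * (star b * z) := by
    have h' : ((lam - m : ℝ) : Quaternion ℝ) * (((lam - p : ℝ) : Quaternion ℝ) * x)
        = ((Quaternion.normSq a : ℝ) : Quaternion ℝ) * x
          + (a * (c * z) + ((lam - m : ℝ) : Quaternion ℝ) * (star b * z)) := by
      rw [A1, mul_add, cmul, A2, mul_add, ← mul_assoc a (star a) x, Quaternion.self_mul_star]
      abel
    calc (((lam - m) * (lam - p) - Quaternion.normSq a : ℝ) : Quaternion ℝ) * x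
        = ((lam - m : ℝ) : Quaternion ℝ) * (((lam - p : ℝ) : Quaternion ℝ) * x)
          - ((Quaternion.normSq a : ℝ) : Quaternion ℝ) * x := by
          push_cast; rw [sub_mul, mul_assoc]
      _ = a * (c * z) + ((lam - m : ℝ) : Quaternion ℝ) * (star b * z) := by rw [h']; abel
  have Dy : (((lam - m) * (lam - p) - Quaternion.normSq a : ℝ) : Quaternion ℝ) * y
      = star a * (star b * z) + ((lam - p : ℝ) : Quaternion ℝ) * (c * z) := by
    have h' : ((lam - p : ℝ) : Quaternion ℝ) * (((lam - m : ℝ) : Quaternion ℝ) * y)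
        = ((Quaternion.normSq a : ℝ) : Quaternion ℝ) * y
          + (star a * (star b * z) + ((lam - p : ℝ) : Quaternion ℝ) * (c * z)) := by
      rw [A2, mul_add, cmul, A1, mul_add, ← mul_assoc (star a) a y, Quaternion.star_mul_self]
      abel
    calc (((lam - m) * (lam - p) - Quaternion.normSq a : ℝ) : Quaternion ℝ) * y
        = ((lam - p : ℝ) : Quaternion ℝ) * (((lam - m : ℝ) : Quaternion ℝ) * y)
          - ((Quaternion.normSq a : ℝ) : Quaternion ℝ) * y := by
          rw [show ((lam - m) * (lam - p) - Quaternion.normSq a : ℝ)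
              = (lam - p) * (lam - m) - Quaternion.normSq a from by ring]
          push_cast; rw [sub_mul, mul_assoc]
      _ = star a * (star b * z) + ((lam - p : ℝ) : Quaternion ℝ) * (c * z) := by rw [h']; abel
  have key : ((((lam - m) * (lam - p) - Quaternion.normSq a) * (lam - n) : ℝ) : Quaternion ℝ) * z
      = b * (a * (c * z)) + star c * (star a * (star b * z))
        + (((lam - m) * Quaternion.normSq b + (lam - p) * Quaternion.normSq c : ℝ) : Quaternion ℝ) * z := by
    have h1 : (((lam - m) * (lam - p) - Quaternion.normSq a : ℝ) : Quaternion ℝ)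
          * (((lam - n : ℝ) : Quaternion ℝ) * z)
        = b * (a * (c * z)) + ((lam - m : ℝ) : Quaternion ℝ)
            * (((Quaternion.normSq b : ℝ) : Quaternion ℝ) * z)
          + (star c * (star a * (star b * z)) + ((lam - p : ℝ) : Quaternion ℝ)
            * (((Quaternion.normSq c : ℝ) : Quaternion ℝ) * z)) := by
      rw [A3, mul_add, cmul, cmul, Dx, Dy, mul_add, mul_add, ← cmul, ← cmul,
          ← mul_assoc b (star b) z, Quaternion.self_mul_star,
          ← mul_assoc (star c) c z, Quaternion.star_mul_self]
    calc ((((lam - m) * (lam - p) - Quaternion.normSq a) * (lam - n) : ℝ) : Quaternion ℝ) * z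
        = (((lam - m) * (lam - p) - Quaternion.normSq a : ℝ) : Quaternion ℝ)
            * (((lam - n : ℝ) : Quaternion ℝ) * z) := by
          rw [Quaternion.coe_mul, mul_assoc]
      _ = _ := by rw [h1]; push_cast; noncomm_ring
  have hstar : b * (a * c) + (star c * star a) * star b
      = ((2 * ((b * (a * c)).re) : ℝ) : Quaternion ℝ) := by
    rw [← Quaternion.self_add_star' (b * (a * c)), star_mul, star_mul]
  have hs : (lam ^ 3 - (p + m + n) * lam ^ 2 + σ * lam - detA : ℝ)
      = ((lam - m) * (lam - p) - Quaternion.normSq a) * (lam - n)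
        - ((lam - m) * Quaternion.normSq b + (lam - p) * Quaternion.normSq c)
        - 2 * (b * (a * c)).re := by
    simp only [σ, detA]; ring
  have part1 : ((lam ^ 3 - (p + m + n) * lam ^ 2 + σ * lam - detA : ℝ) : Quaternion ℝ) * z
      = b * (a * (c * z)) + star c * (star a * (star b * z))
        - (b * (a * c) + (star c * star a) * star b) * z := by
    rw [hs, Quaternion.coe_sub, Quaternion.coe_sub, sub_mul, sub_mul, key, hstar]
    abel
  refine ⟨part1, fun hz => ?_⟩
  have assoc0 : b * (a * (c * z)) + star c * (star a * (star b * z))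
      - (b * (a * c) + (star c * star a) * star b) * z = 0 := by noncomm_ring
  have h0 := mul_eq_zero.mp (part1.trans assoc0)
  rcases h0 with h0 | h0
  · exact Quaternion.coe_injective (h0.trans (Quaternion.coe_zero).symm)
  · exact absurd h0 hz
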